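/- Let (X,Y,R,Ř,Π) be a reduced simply connected root datum with Weyl group W, let k be a field, and let c : Π → k∖{0} be parameters such that c_α = c_β whenever the order m_{α,β} of s_αs_β in W is odd. Let λ ∈ Hom_ℤ(X, k) be a weight, with W acting by (w·λ)(x) = λ(w^{−1}x), and assume λ is parabolic, i.e. there exists u ∈ W such that the stabilizer of u·λ in W is generated by the simple reflections fixing u·λ. Then for every sequence α_1, …, α_m of simple roots with s_{α_m}⋯s_{α_1}·λ = λ, the number of indices i ∈ {1,…,m} such that λ(s_{α_1}⋯s_{α_{i−1}}(α_i)) ∈ {c_{α_i}, −c_{α_i}} is even. -/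

import Mathlib

/-- A reduced root datum. -/
structure RRDatum (X Y : Type*) [AddCommGroup X] [AddCommGroup Y] where
  pair : X →+ Y →+ ℤ
  perfL : Function.Bijective fun x : X => pair x
  perfR : Function.Bijective fun y : Y => pair.flip y
  R : Finset X
  coroot : X → Y
  coroot_injOn : Set.InjOn coroot ↑R
  pair_self : ∀ α ∈ R, pair α (coroot α) = 2
  refl_mem : ∀ α ∈ R, ∀ β ∈ R, β - pair β (coroot α) • α ∈ R
  corefl_mem : ∀ α ∈ R, ∀ β ∈ R, coroot β - pair α (coroot β) • coroot α ∈ coroot '' ↑R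
  isReduced : ∀ α ∈ R, ∀ n : ℤ, n • α ∈ R → n = 1 ∨ n = -1
  base : Finset X
  base_sub : base ⊆ R
  base_indep : LinearIndependent ℤ (fun a : {x : X // x ∈ base} => (a : X))
  base_span : ∀ β ∈ R, (∃ c : X → ℕ, (β : X) = ∑ a ∈ base, (c a : ℤ) • a) ∨
      (∃ c : X → ℕ, (β : X) = -∑ a ∈ base, (c a : ℤ) • a)

namespace RRDatum

variable {X Y : Type*} [AddCommGroup X] [AddCommGroup Y] (D : RRDatum X Y)

/-- The reflection associated to a root. -/
def refl (α : X) : X → X := fun x => x - D.pair x (D.coroot α) • α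

lemma refl_involutive {α : X} (hα : α ∈ D.R) : Function.Involutive (D.refl α) := by
  intro x
  simp only [refl, map_sub, map_zsmul, AddMonoidHom.sub_apply, AddMonoidHom.smul_apply,
    D.pair_self α hα, smul_eq_mul]
  rw [sub_smul]
  simp [mul_comm, two_mul, sub_smul, add_smul]

/-- The reflection as an additive automorphism. -/
def reflAut {α : X} (hα : α ∈ D.R) : X ≃+ X where
  toFun := D.refl α
  invFun := D.refl α
  left_inv := D.refl_involutive hα
  right_inv := D.refl_involutive hα
  map_add' x y := by
    simp only [refl, map_add, AddMonoidHom.add_apply, add_smul]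
    abel

/-- The element of the Weyl group given by a word in simple reflections; the head of
the list is applied first, i.e. `word [α₁, …, αₙ] = s_{αₙ} ∘ ⋯ ∘ s_{α₁}`. -/
def word (l : List X) : X → X := l.foldr (fun α f => f ∘ D.refl α) id

/-- The length of an element of the Weyl group with respect to the simple reflections. -/
noncomputable def len (w : X → X) : ℕ :=
  sInf {n | ∃ l : List X, (∀ α ∈ l, α ∈ D.base) ∧ l.length = n ∧ D.word l = w}

end RRDatum

/-- The multiplicative group structure on `AddAut X` (composition), as in the older Mathlib. -/
instance addAutGroupOld (A : Type*) [Add A] : Group (AddAut A) where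
  mul g h := AddEquiv.trans h g
  one := AddEquiv.refl _
  inv := AddEquiv.symm
  mul_assoc _ _ _ := rfl
  one_mul _ := rfl
  mul_one _ := rfl
  inv_mul_cancel := AddEquiv.self_trans_symm

/-- The stabilizer, inside the full group of additive automorphisms, of an additive
character `lam : X →+ k`. -/
def addCharStabilizer {X : Type*} [AddCommGroup X] {k : Type*} [Field k]
    (lam : X →+ k) : Subgroup (AddAut X) where
  carrier := {w | ∀ x, lam (w x) = lam x}
  one_mem' := by intro x; rfl
  mul_mem' := by
    intro a b ha hb x
    have : (a * b) x = a (b x) := rfl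
    rw [this, ha, hb]
  inv_mem' := by
    intro a ha x
    have h := ha (a⁻¹ x)
    have h' : a (a⁻¹ x) = x := a.apply_symm_apply x
    rw [h'] at h
    exact h.symm


namespace RRDatum

variable {X Y : Type*} [AddCommGroup X] [AddCommGroup Y] (D : RRDatum X Y)

/-! ### Basic lemmas -/

lemma eq_zero_of_zsmul (D : RRDatum X Y) {n : ℤ} {x : X} (hn : n ≠ 0) (h : n • x = 0) :
    x = 0 := by
  have h2 : D.pair x = D.pair 0 := by
    ext y
    have h1 : (D.pair (n • x)) y = 0 := by rw [h]; simp
    rw [map_zsmul] at h1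
    simp only [AddMonoidHom.smul_apply, smul_eq_mul] at h1
    rcases mul_eq_zero.mp h1 with h' | h'
    · exact absurd h' (by exact_mod_cast hn)
    · simp [h']
  exact D.perfL.injective h2

lemma zero_not_mem_R : (0 : X) ∉ D.R := by
  intro h
  have := D.pair_self 0 h
  simp at this

lemma root_ne_zero {α : X} (hα : α ∈ D.R) : α ≠ 0 := by
  rintro rfl; exact D.zero_not_mem_R hα

lemma refl_apply (α x : X) : D.refl α x = x - D.pair x (D.coroot α) • α := rfl

lemma refl_add (α x y : X) : D.refl α (x + y) = D.refl α x + D.refl α y := by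
  simp only [refl_apply, map_add, AddMonoidHom.add_apply, add_smul]
  abel

lemma refl_neg (α x : X) : D.refl α (-x) = -(D.refl α x) := by
  simp only [refl_apply, map_neg, AddMonoidHom.neg_apply, neg_smul]
  abel

lemma refl_sub (α x y : X) : D.refl α (x - y) = D.refl α x - D.refl α y := by
  simp only [refl_apply, map_sub, AddMonoidHom.sub_apply, sub_smul]
  abel

lemma refl_zsmul (α : X) (n : ℤ) (x : X) : D.refl α (n • x) = n • D.refl α x := by
  simp only [refl_apply, map_zsmul, AddMonoidHom.smul_apply, smul_eq_mul]
  module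

lemma refl_self {α : X} (hα : α ∈ D.R) : D.refl α α = -α := by
  simp only [refl_apply, D.pair_self α hα]
  rw [two_smul]
  abel

lemma refl_root_mem {α β : X} (hα : α ∈ D.R) (hβ : β ∈ D.R) : D.refl α β ∈ D.R :=
  D.refl_mem α hα β hβ

lemma neg_root_mem {α : X} (hα : α ∈ D.R) : -α ∈ D.R := by
  have := D.refl_root_mem hα hα
  rwa [D.refl_self hα] at this

lemma pair_refl_left (α x : X) (y : Y) :
    D.pair (D.refl α x) y = D.pair x y - D.pair x (D.coroot α) * D.pair α y := by
  simp only [refl_apply, map_sub, map_zsmul, AddMonoidHom.sub_apply,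
    AddMonoidHom.smul_apply, smul_eq_mul]

/-- Equivariance of coroots: the coroot of `s_α β` is `β̌ - ⟨α,β̌⟩α̌`. -/
lemma coroot_refl {α β : X} (hα : α ∈ D.R) (hβ : β ∈ D.R) :
    D.coroot (D.refl α β) = D.coroot β - D.pair α (D.coroot β) • D.coroot α := by
  obtain ⟨γ, hγR', hγ⟩ := D.corefl_mem α hα β hβ
  have hγR : γ ∈ D.R := hγR' 
  -- key: pairing against `coroot γ` is pairing of the reflected element against `coroot β`
  have key : ∀ x : X, D.pair x (D.coroot γ) = D.pair (D.refl α x) (D.coroot β) := by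
    intro x
    rw [hγ, pair_refl_left]
    simp only [map_sub, map_zsmul, smul_eq_mul]
    ring
  suffices hsuff : γ = D.refl α β by
    rw [← hsuff, hγ]
  -- let γ' := refl α γ; we show β = γ' using finiteness of R
  set γ' : X := D.refl α γ with hγ'
  have hγ'R : γ' ∈ D.R := D.refl_root_mem hα hγR
  have hpairγ' : D.pair γ' (D.coroot β) = 2 := by
    rw [← key γ, D.pair_self γ hγR]
  -- the auxiliary map u
  set u : X → X := fun x => D.refl β (D.refl α (D.refl γ (D.refl α x))) with hu
  have hu_mem : ∀ x ∈ D.R, u x ∈ D.R := by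
    intro x hx
    exact D.refl_root_mem hβ (D.refl_root_mem hα (D.refl_root_mem hγR
      (D.refl_root_mem hα hx)))
  have hu_formula : ∀ x : X, u x = x + D.pair x (D.coroot β) • (β - γ') := by
    intro x
    have hpx : D.pair (D.refl α x) (D.coroot γ) = D.pair x (D.coroot β) := by
      rw [key (D.refl α x), D.refl_involutive hα x]
    have h1 : D.refl γ (D.refl α x) = D.refl α x - D.pair x (D.coroot β) • γ := by
      rw [D.refl_apply γ, hpx]
    have h2 : D.refl α (D.refl γ (D.refl α x)) = x - D.pair x (D.coroot β) • γ' := by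
      rw [h1, D.refl_sub, D.refl_zsmul, D.refl_involutive hα x, ← hγ']
    show D.refl β (D.refl α (D.refl γ (D.refl α x))) = _
    rw [h2, D.refl_apply β]
    have h4 : D.pair (x - D.pair x (D.coroot β) • γ') (D.coroot β)
        = - D.pair x (D.coroot β) := by
      rw [map_sub, map_zsmul]
      simp only [AddMonoidHom.sub_apply, AddMonoidHom.smul_apply, smul_eq_mul]
      rw [hpairγ']
      ring
    rw [h4]
    module

  by_cases hbg : β = γ'
  · -- then γ = refl α β
    have : D.refl α γ' = γ := D.refl_involutive hα γ
    rw [← hbg] at this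
    rw [← this]
  · -- infinite orbit contradiction
    exfalso
    have hd : β - γ' ≠ 0 := sub_ne_zero.mpr hbg
    set f : ℕ → X := fun n => β + ((2 * n : ℤ)) • (β - γ') with hf
    have hfR : ∀ n, f n ∈ D.R := by
      intro n
      induction n with
      | zero => simpa [hf] using hβ
      | succ n ih =>
        have step : u (f n) = f (n + 1) := by
          rw [hu_formula (f n)]
          have hp : D.pair (f n) (D.coroot β) = 2 := by
            simp only [hf, map_add, map_zsmul, AddMonoidHom.add_apply,
              AddMonoidHom.smul_apply, smul_eq_mul, map_sub, AddMonoidHom.sub_apply]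
            rw [D.pair_self β hβ, hpairγ']
            ring
          rw [hp, hf]
          simp only
          push_cast
          module
        rw [← step]
        exact hu_mem _ ih
    have hinj : Function.Injective f := by
      intro n m hnm
      by_contra hne
      simp only [hf] at hnm
      have h5 : ((2 * n : ℤ)) • (β - γ') = ((2 * m : ℤ)) • (β - γ') :=
        add_left_cancel hnm
      have h6 : ((2 * n : ℤ) - 2 * m) • (β - γ') = 0 := by
        rw [sub_smul, h5, sub_self]
      have h0 : ((2 * n : ℤ) - 2 * m) ≠ 0 := by
        intro hc
        apply hne
        omega
      exact hd (D.eq_zero_of_zsmul h0 h6)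
    have : (↑D.R : Set X).Infinite :=
      Set.infinite_of_injective_forall_mem hinj (fun n => hfR n)
    exact this (D.R.finite_toSet)


/-! ### Reflection conjugation and word lemmas -/

lemma refl_refl {α β : X} (hα : α ∈ D.R) (hβ : β ∈ D.R) (x : X) :
    D.refl (D.refl α β) x = D.refl α (D.refl β (D.refl α x)) := by
  have h1 : D.pair x (D.coroot (D.refl α β)) = D.pair (D.refl α x) (D.coroot β) := by
    rw [D.coroot_refl hα hβ, D.pair_refl_left]
    simp only [map_sub, map_zsmul, AddMonoidHom.sub_apply, AddMonoidHom.smul_apply,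
      smul_eq_mul]
    ring
  have hL : D.refl (D.refl α β) x = x - D.pair (D.refl α x) (D.coroot β) • D.refl α β := by
    rw [D.refl_apply (D.refl α β) x, h1]
  have hR : D.refl α (D.refl β (D.refl α x))
      = x - D.pair (D.refl α x) (D.coroot β) • D.refl α β := by
    rw [D.refl_apply β (D.refl α x), D.refl_sub, D.refl_zsmul, D.refl_involutive hα x]
  rw [hL, hR]

lemma word_nil : D.word ([] : List X) = id := rfl

lemma word_cons (γ : X) (l : List X) : D.word (γ :: l) = D.word l ∘ D.refl γ := rfl

lemma word_apply_cons (γ : X) (l : List X) (x : X) :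
    D.word (γ :: l) x = D.word l (D.refl γ x) := rfl

lemma word_append (l₁ l₂ : List X) : D.word (l₁ ++ l₂) = D.word l₂ ∘ D.word l₁ := by
  induction l₁ with
  | nil => rfl
  | cons γ t ih =>
    rw [List.cons_append, word_cons, ih, word_cons]
    rfl

lemma word_concat (l : List X) (δ : X) : D.word (l ++ [δ]) = D.refl δ ∘ D.word l := by
  rw [word_append]
  rfl

lemma word_root_mem {l : List X} (hl : ∀ γ ∈ l, γ ∈ D.R) {x : X} (hx : x ∈ D.R) :
    D.word l x ∈ D.R := by
  induction l generalizing x with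
  | nil => exact hx
  | cons γ t ih =>
    rw [word_apply_cons]
    exact ih (fun γ' h => hl γ' (List.mem_cons_of_mem _ h))
      (D.refl_root_mem (hl γ (List.mem_cons_self)) hx)

lemma word_add (l : List X) (x y : X) : D.word l (x + y) = D.word l x + D.word l y := by
  induction l generalizing x y with
  | nil => rfl
  | cons γ t ih => rw [word_apply_cons, D.refl_add, ih, word_apply_cons, word_apply_cons]

lemma word_neg (l : List X) (x : X) : D.word l (-x) = -(D.word l x) := by
  induction l generalizing x with
  | nil => rfl
  | cons γ t ih => rw [word_apply_cons, D.refl_neg, ih, word_apply_cons]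

lemma word_zsmul (l : List X) (n : ℤ) (x : X) : D.word l (n • x) = n • D.word l x := by
  induction l generalizing x with
  | nil => rfl
  | cons γ t ih => rw [word_apply_cons, D.refl_zsmul, ih, word_apply_cons]

lemma word_rev_cancel {l : List X} (hl : ∀ γ ∈ l, γ ∈ D.R) (x : X) :
    D.word l.reverse (D.word l x) = x := by
  induction l generalizing x with
  | nil => rfl
  | cons γ t ih =>
    rw [word_apply_cons, List.reverse_cons, word_concat]
    show D.refl γ (D.word t.reverse (D.word t (D.refl γ x))) = x
    rw [ih (fun γ' h => hl γ' (List.mem_cons_of_mem _ h)),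
      D.refl_involutive (hl γ (List.mem_cons_self))]

lemma word_cancel {l : List X} (hl : ∀ γ ∈ l, γ ∈ D.R) (x : X) :
    D.word l (D.word l.reverse x) = x := by
  have := D.word_rev_cancel (l := l.reverse) (fun γ h => hl γ (List.mem_reverse.mp h)) x
  rwa [List.reverse_reverse] at this

lemma refl_word {l : List X} (hl : ∀ γ ∈ l, γ ∈ D.R) {β : X} (hβ : β ∈ D.R) (x : X) :
    D.refl (D.word l β) x = D.word l (D.refl β (D.word l.reverse x)) := by
  induction l generalizing β x with
  | nil => rfl
  | cons γ t ih =>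
    have hγ : γ ∈ D.R := hl γ (List.mem_cons_self)
    have ht : ∀ γ' ∈ t, γ' ∈ D.R := fun γ' h => hl γ' (List.mem_cons_of_mem _ h)
    rw [word_apply_cons]
    rw [ih ht (D.refl_root_mem hγ hβ) x]
    rw [List.reverse_cons, word_concat]
    show D.word t (D.refl (D.refl γ β) (D.word t.reverse x))
      = D.word (γ :: t) (D.refl β (D.refl γ (D.word t.reverse x)))
    rw [D.refl_refl hγ hβ, word_apply_cons]

/-! ### Positive and negative roots -/

/-- `x` is a nonnegative integer combination of the simple roots. -/
def IsPos (x : X) : Prop := ∃ c : X → ℕ, x = ∑ a ∈ D.base, (c a : ℤ) • a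

def IsNeg (x : X) : Prop := D.IsPos (-x)

lemma coeff_zero (g : X → ℤ) (h : ∑ a ∈ D.base, g a • a = 0) : ∀ a ∈ D.base, g a = 0 := by
  intro a ha
  have key := linearIndependent_iff'.mp D.base_indep Finset.univ (fun i => g i.1)
  have hsum : ∑ i : {x : X // x ∈ D.base}, g i.1 • (i : X) = 0 := by
    rw [← h]
    exact Finset.sum_coe_sort D.base (fun a => g a • a)
  exact key hsum ⟨a, ha⟩ (Finset.mem_univ _)

lemma coeff_unique (g₁ g₂ : X → ℤ)
    (h : ∑ a ∈ D.base, g₁ a • a = ∑ a ∈ D.base, g₂ a • a) :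
    ∀ a ∈ D.base, g₁ a = g₂ a := by
  intro a ha
  have h0 : ∑ a ∈ D.base, (g₁ a - g₂ a) • a = 0 := by
    simp only [sub_smul, Finset.sum_sub_distrib, h, sub_self]
  have := D.coeff_zero _ h0 a ha
  omega

lemma isPos_base {δ : X} (hδ : δ ∈ D.base) : D.IsPos δ := by
  classical
  refine ⟨fun a => if a = δ then 1 else 0, ?_⟩
  have : ∀ a ∈ D.base, ((if a = δ then (1:ℕ) else 0 : ℕ) : ℤ) • a
      = if a = δ then δ else 0 := by
    intro a _
    by_cases h : a = δ <;> simp [h]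
  rw [Finset.sum_congr rfl this, Finset.sum_ite_eq' D.base δ (fun _ => δ), if_pos hδ]

lemma root_dichotomy {x : X} (hx : x ∈ D.R) : D.IsPos x ∨ D.IsNeg x := by
  rcases D.base_span x hx with ⟨c, hc⟩ | ⟨c, hc⟩
  · exact Or.inl ⟨c, hc⟩
  · right
    refine ⟨c, ?_⟩
    rw [hc, neg_neg]

lemma not_pos_and_neg {x : X} (hx : x ∈ D.R) : ¬(D.IsPos x ∧ D.IsNeg x) := by
  rintro ⟨⟨c₁, h₁⟩, ⟨c₂, h₂⟩⟩
  have h0 : ∑ a ∈ D.base, ((c₁ a : ℤ) + (c₂ a : ℤ)) • a = 0 := by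
    simp only [add_smul, Finset.sum_add_distrib, ← h₁, ← h₂]
    abel
  have hz := D.coeff_zero _ h0
  apply D.root_ne_zero hx
  rw [h₁]
  apply Finset.sum_eq_zero
  intro a ha
  have := hz a ha
  have hc1 : c₁ a = 0 := by omega
  simp [hc1]

lemma isNeg_neg_iff {x : X} : D.IsNeg (-x) ↔ D.IsPos x := by
  unfold IsNeg
  rw [neg_neg]

lemma refl_pos_of_pos {δ β : X} (hδ : δ ∈ D.base) (hβ : β ∈ D.R) (hpos : D.IsPos β)
    (hne : β ≠ δ) : D.IsPos (D.refl δ β) := by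
  classical
  have hδR : δ ∈ D.R := D.base_sub hδ
  have hrr : D.refl δ β ∈ D.R := D.refl_root_mem hδR hβ
  rcases D.root_dichotomy hrr with h | h
  · exact h
  exfalso
  obtain ⟨c₁, hc₁⟩ := hpos
  obtain ⟨d, hd⟩ := h
  set p : ℤ := D.pair β (D.coroot δ) with hp
  have hsum : ∑ a ∈ D.base, ((c₁ a : ℤ) + (d a : ℤ)) • a
      = ∑ a ∈ D.base, (if a = δ then p else 0) • a := by
    have hrhs : ∑ a ∈ D.base, (if a = δ then p else 0) • a = p • δ := by
      have : ∀ a ∈ D.base, (if a = δ then p else 0) • a = if a = δ then p • δ else 0 := by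
        intro a _
        by_cases h' : a = δ <;> simp [h']
      rw [Finset.sum_congr rfl this, Finset.sum_ite_eq' D.base δ (fun _ => p • δ),
        if_pos hδ]
    rw [hrhs]
    have hd' : -β + p • δ = ∑ a ∈ D.base, (d a : ℤ) • a := by
      rw [← hd]
      simp only [refl_apply, ← hp]
      abel
    simp only [add_smul, Finset.sum_add_distrib, ← hc₁, ← hd']
    abel
  have hcoef := D.coeff_unique _ _ hsum
  -- all coefficients of β away from δ vanish
  have hzero : ∀ a ∈ D.base, a ≠ δ → (c₁ a : ℤ) = 0 := by
    intro a ha hne'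
    have := hcoef a ha
    rw [if_neg hne'] at this
    omega
  have hβδ : β = ((c₁ δ : ℤ)) • δ := by
    rw [hc₁]
    by_cases hδb : δ ∈ D.base
    · rw [Finset.sum_eq_single_of_mem δ hδb]
      intro b hb hbne
      rw [hzero b hb hbne, zero_smul]
    · exact absurd hδ hδb
  rcases D.isReduced δ hδR (c₁ δ) (by rw [← hβδ]; exact hβ) with h1 | h1
  · apply hne
    rw [hβδ, h1, one_smul]
  · omega

lemma eq_of_pos_neg_refl {δ β : X} (hδ : δ ∈ D.base) (hβ : β ∈ D.R) (hpos : D.IsPos β)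
    (hneg : D.IsNeg (D.refl δ β)) : β = δ := by
  by_contra hne
  exact D.not_pos_and_neg (D.refl_root_mem (D.base_sub hδ) hβ)
    ⟨D.refl_pos_of_pos hδ hβ hpos hne, hneg⟩


/-! ### Exchange lemma and length -/

lemma word_take_succ (l : List X) (j : ℕ) (hj : j < l.length) :
    D.word (l.take (j+1)) = D.refl l[j] ∘ D.word (l.take j) := by
  rw [List.take_succ, List.getElem?_eq_getElem hj]
  show D.word (l.take j ++ [l[j]]) = _
  rw [word_concat]

lemma exchange {l : List X} (hl : ∀ γ ∈ l, γ ∈ D.base) {δ : X} (hδ : δ ∈ D.base)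
    (hneg : D.IsNeg (D.word l δ)) :
    ∃ l' : List X, (∀ γ ∈ l', γ ∈ D.base) ∧ l'.length + 1 = l.length ∧
      D.word l' = D.word l ∘ D.refl δ := by
  classical
  have hδR : δ ∈ D.R := D.base_sub hδ
  have hJne : sInf {j | j ≤ l.length ∧ D.IsNeg (D.word (l.take j) δ)}
      ∈ {j | j ≤ l.length ∧ D.IsNeg (D.word (l.take j) δ)} :=
    Nat.sInf_mem ⟨l.length, le_refl _, by rwa [List.take_length]⟩
  set j₀ := sInf {j | j ≤ l.length ∧ D.IsNeg (D.word (l.take j) δ)} with hj₀def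
  have hj₀pos : j₀ ≠ 0 := by
    intro h0
    rw [h0] at hJne
    have h2 : D.IsNeg δ := by simpa [List.take_zero, word_nil] using hJne.2
    exact D.not_pos_and_neg hδR ⟨D.isPos_base hδ, h2⟩
  obtain ⟨j, hj⟩ : ∃ j, j₀ = j + 1 := ⟨j₀ - 1, by omega⟩
  have hjlt : j < l.length := by have := hJne.1; omega
  have hmin : ¬ D.IsNeg (D.word (l.take j) δ) := by
    intro hc
    have : j₀ ≤ j := Nat.sInf_le ⟨by omega, hc⟩
    omega
  have hTbase : ∀ γ ∈ l.take j, γ ∈ D.base := fun γ h => hl γ (List.take_subset _ _ h)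
  have hTR : ∀ γ ∈ l.take j, γ ∈ D.R := fun γ h => D.base_sub (hTbase γ h)
  have hσR : D.word (l.take j) δ ∈ D.R := D.word_root_mem hTR hδR
  have hσpos : D.IsPos (D.word (l.take j) δ) := (D.root_dichotomy hσR).resolve_right hmin
  have hstep : D.word (l.take (j+1)) δ = D.refl (l[j]) (D.word (l.take j) δ) := by
    rw [D.word_take_succ l j hjlt]
    rfl
  have hγj_base : l[j] ∈ D.base := hl _ (List.getElem_mem hjlt)
  have hσeq : D.word (l.take j) δ = l[j] := by
    apply D.eq_of_pos_neg_refl hγj_base hσR hσpos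
    rw [← hstep, ← hj]
    exact hJne.2
  refine ⟨l.take j ++ l.drop (j+1), ?_, ?_, ?_⟩
  · intro γ hγ
    rcases List.mem_append.mp hγ with h | h
    · exact hTbase γ h
    · exact hl γ (List.drop_subset _ _ h)
  · rw [List.length_append, List.length_take, List.length_drop]
    omega
  · funext x
    rw [word_append]
    show D.word (l.drop (j+1)) (D.word (l.take j) x) = D.word l (D.refl δ x)
    conv_rhs => rw [← List.take_append_drop (j+1) l]
    rw [word_append]
    show _ = D.word (l.drop (j+1)) (D.word (l.take (j+1)) (D.refl δ x))
    congr 1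
    rw [D.word_take_succ l j hjlt]
    show D.word (l.take j) x = D.refl l[j] (D.word (l.take j) (D.refl δ x))
    rw [← hσeq, D.refl_word hTR hδR]
    rw [D.word_rev_cancel hTR (D.refl δ x), D.refl_involutive hδR x]

lemma len_le {l : List X} (hl : ∀ γ ∈ l, γ ∈ D.base) : D.len (D.word l) ≤ l.length :=
  Nat.sInf_le ⟨l, hl, rfl, rfl⟩

lemma exists_min_word {l : List X} (hl : ∀ γ ∈ l, γ ∈ D.base) :
    ∃ l₀ : List X, (∀ γ ∈ l₀, γ ∈ D.base) ∧ l₀.length = D.len (D.word l) ∧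
      D.word l₀ = D.word l := by
  have : D.len (D.word l) ∈ {n | ∃ l' : List X, (∀ α ∈ l', α ∈ D.base) ∧ l'.length = n ∧
      D.word l' = D.word l} := Nat.sInf_mem ⟨l.length, l, hl, rfl, rfl⟩
  obtain ⟨l₀, h1, h2, h3⟩ := this
  exact ⟨l₀, h1, h2, h3⟩

lemma word_eq_id_of_len_zero {l : List X} (hl : ∀ γ ∈ l, γ ∈ D.base)
    (h : D.len (D.word l) = 0) : D.word l = id := by
  obtain ⟨l₀, _, h2, h3⟩ := D.exists_min_word hl
  rw [h] at h2
  rw [← h3, List.length_eq_zero_iff.mp h2]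
  rfl

lemma len_comp_refl_lb {l : List X} (hl : ∀ γ ∈ l, γ ∈ D.base) {δ : X} (hδ : δ ∈ D.base) :
    D.len (D.word l) ≤ D.len (D.word l ∘ D.refl δ) + 1 := by
  have hcons : D.word l ∘ D.refl δ = D.word (δ :: l) := (D.word_cons δ l).symm
  rw [hcons]
  obtain ⟨l', h1, h2, h3⟩ := D.exists_min_word (l := δ :: l)
      (by intro γ h; rcases List.mem_cons.mp h with h | h
          · exact h ▸ hδ
          · exact hl γ h)
  have hww : D.word (δ :: l') = D.word l := by
    funext x
    rw [word_apply_cons, h3, word_apply_cons, D.refl_involutive (D.base_sub hδ) x]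
  calc D.len (D.word l) = D.len (D.word (δ :: l')) := by rw [hww]
    _ ≤ (δ :: l').length := D.len_le (by
        intro γ h
        rcases List.mem_cons.mp h with h | h
        · exact h ▸ hδ
        · exact h1 γ h)
    _ = l'.length + 1 := by simp
    _ = D.len (D.word (δ :: l)) + 1 := by rw [h2]

lemma len_descent {l : List X} (hl : ∀ γ ∈ l, γ ∈ D.base) {δ : X} (hδ : δ ∈ D.base)
    (hneg : D.IsNeg (D.word l δ)) :
    D.len (D.word l ∘ D.refl δ) + 1 = D.len (D.word l) := by
  obtain ⟨l₀, h1, h2, h3⟩ := D.exists_min_word hl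
  obtain ⟨l'', hb, hlen, hw⟩ := D.exchange h1 hδ (by rwa [h3])
  have hle : D.len (D.word l ∘ D.refl δ) ≤ l''.length := by
    have : D.word l'' = D.word l ∘ D.refl δ := by rw [hw, h3]
    rw [← this]
    exact D.len_le hb
  have := D.len_comp_refl_lb hl hδ
  omega

lemma len_ascent {l : List X} (hl : ∀ γ ∈ l, γ ∈ D.base) {δ : X} (hδ : δ ∈ D.base)
    (hpos : D.IsPos (D.word l δ)) :
    D.len (D.word l ∘ D.refl δ) = D.len (D.word l) + 1 := by
  have hδR : δ ∈ D.R := D.base_sub hδ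
  have hcons : D.word l ∘ D.refl δ = D.word (δ :: l) := (D.word_cons δ l).symm
  have hlcons : ∀ γ ∈ δ :: l, γ ∈ D.base := by
    intro γ h
    rcases List.mem_cons.mp h with h | h
    · exact h ▸ hδ
    · exact hl γ h
  have hneg : D.IsNeg (D.word (δ :: l) δ) := by
    rw [word_apply_cons, D.refl_self hδR, D.word_neg]
    unfold IsNeg
    rwa [neg_neg]
  have hdes := D.len_descent hlcons hδ hneg
  have hid : D.word (δ :: l) ∘ D.refl δ = D.word l := by
    funext x
    rw [Function.comp_apply, word_apply_cons, D.refl_involutive hδR x]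
  rw [hid] at hdes
  rw [hcons]
  omega

lemma exists_neg_of_ne_id {l : List X} (hl : ∀ γ ∈ l, γ ∈ D.base)
    (hne : D.word l ≠ id) : ∃ δ ∈ D.base, D.IsNeg (D.word l δ) := by
  by_contra hc
  push_neg at hc
  obtain ⟨l₀, h1, h2, h3⟩ := D.exists_min_word hl
  rcases l₀ with _ | ⟨γ, t⟩
  · exact hne (by rw [← h3]; rfl)
  have hγ : γ ∈ D.base := h1 γ (List.mem_cons_self)
  have hγR : γ ∈ D.R := D.base_sub hγ
  have ht : ∀ γ' ∈ t, γ' ∈ D.base := fun γ' h => h1 γ' (List.mem_cons_of_mem _ h)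
  have hvt : D.word t = D.word (γ :: t) ∘ D.refl γ := by
    funext x
    rw [Function.comp_apply, word_apply_cons, D.refl_involutive hγR x]
  have hwneg : D.IsNeg (D.word t γ) := by
    rw [hvt]
    show D.IsNeg (D.word (γ :: t) (D.refl γ γ))
    rw [D.refl_self hγR, D.word_neg, h3]
    have : ¬ D.IsNeg (D.word l γ) := hc γ hγ
    have hpos : D.IsPos (D.word l γ) :=
      (D.root_dichotomy
        (D.word_root_mem (fun a ha => D.base_sub (hl a ha)) hγR)).resolve_right this
    unfold IsNeg
    rwa [neg_neg]
  obtain ⟨t', htb, htlen, htw⟩ := D.exchange ht hγ hwneg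
  have ht'w : D.word t' = D.word l := by
    rw [htw, hvt, ← h3]
    funext x
    show D.word (γ :: t) (D.refl γ (D.refl γ x)) = D.word (γ :: t) x
    rw [D.refl_involutive hγR x]
  have hfin : D.len (D.word l) ≤ t'.length := by rw [← ht'w]; exact D.len_le htb
  have hlen₀ : (γ :: t).length = D.len (D.word l) := h2
  simp only [List.length_cons] at hlen₀
  omega


/-! ### Sum helpers -/

lemma base_indicator [DecidableEq X] {β : X} (hβ : β ∈ D.base) :
    β = ∑ a ∈ D.base, (((if a = β then 1 else 0 : ℕ)) : ℤ) • a := by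
  have : ∀ a ∈ D.base, (((if a = β then 1 else 0 : ℕ)) : ℤ) • a
      = if a = β then β else 0 := by
    intro a _
    by_cases h : a = β <;> simp [h]
  rw [Finset.sum_congr rfl this, Finset.sum_ite_eq' D.base β (fun _ => β), if_pos hβ]

lemma two_coeff_sum [DecidableEq X] {α δ : X} (hα : α ∈ D.base) (hδ : δ ∈ D.base)
    (hne : α ≠ δ) (p q : ℤ) :
    ∑ a ∈ D.base, (if a = α then p else if a = δ then q else 0) • a = p • α + q • δ := by
  have hsplit : ∀ a ∈ D.base, (if a = α then p else if a = δ then q else 0) • a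
      = (if a = α then p • α else 0) + (if a = δ then q • δ else 0) := by
    intro a _
    by_cases h1 : a = α
    · subst h1
      rw [if_pos rfl, if_pos rfl, if_neg hne, add_zero]
    · rw [if_neg h1, if_neg h1, zero_add]
      by_cases h2 : a = δ
      · subst h2; rw [if_pos rfl, if_pos rfl]
      · rw [if_neg h2, if_neg h2, zero_smul]
  rw [Finset.sum_congr rfl hsplit, Finset.sum_add_distrib,
    Finset.sum_ite_eq' D.base α (fun _ => p • α), Finset.sum_ite_eq' D.base δ
      (fun _ => q • δ), if_pos hα, if_pos hδ]

lemma sum_eq_two_support {α δ : X} (hα : α ∈ D.base) (hδ : δ ∈ D.base) (hne : α ≠ δ)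
    (g : X → ℤ) (hzero : ∀ a ∈ D.base, a ≠ α → a ≠ δ → g a = 0) :
    ∑ a ∈ D.base, g a • a = g α • α + g δ • δ := by
  classical
  have : ∀ a ∈ D.base, g a • a = (if a = α then g α else if a = δ then g δ else 0) • a := by
    intro a ha
    by_cases h1 : a = α
    · subst h1; rw [if_pos rfl]
    · by_cases h2 : a = δ
      · subst h2; rw [if_neg h1, if_pos rfl]
      · rw [if_neg h1, if_neg h2, hzero a ha h1 h2]
  rw [Finset.sum_congr rfl this, D.two_coeff_sum hα hδ hne]

/-! ### The dihedral lemma -/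

lemma word_span {α δ : X} :
    ∀ (t : List X), (∀ γ ∈ t, γ = α ∨ γ = δ) → ∀ x : X,
      ∃ m n : ℤ, D.word t x = x + m • α + n • δ := by
  intro t
  induction t with
  | nil => intro _ x; exact ⟨0, 0, by simp [word_nil]⟩
  | cons γ s ih =>
    intro ht x
    obtain ⟨m, n, hmn⟩ := ih (fun γ' h => ht γ' (List.mem_cons_of_mem _ h)) (D.refl γ x)
    rw [word_apply_cons, hmn]
    rcases ht γ (List.mem_cons_self) with h | h
    · subst h
      exact ⟨m - D.pair x (D.coroot γ), n, by rw [D.refl_apply]; module⟩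
    · subst h
      exact ⟨m, n - D.pair x (D.coroot γ), by rw [D.refl_apply]; module⟩

lemma coe_inv_of_coe_word {t : List X} (ht : ∀ γ ∈ t, γ ∈ D.R) {V : AddAut X}
    (hV : ⇑V = D.word t) : ⇑V⁻¹ = D.word t.reverse := by
  funext x
  have h1 : V (D.word t.reverse x) = x := by
    rw [show (V : X → X) = D.word t from hV]
    exact D.word_cancel ht x
  calc V⁻¹ x = V⁻¹ (V (D.word t.reverse x)) := by rw [h1]
    _ = D.word t.reverse x := by
        show (V⁻¹ * V) (D.word t.reverse x) = _
        rw [inv_mul_cancel]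
        rfl

lemma odd_order_of_dihedral_conj {α δ : X} (hα : α ∈ D.base) (hδ : δ ∈ D.base)
    {t : List X} (ht : ∀ γ ∈ t, γ = α ∨ γ = δ) (hconj : D.word t α = δ) :
    Odd (orderOf (D.reflAut (D.base_sub hα) * D.reflAut (D.base_sub hδ))) := by
  have hαR : α ∈ D.R := D.base_sub hα
  have hδR : δ ∈ D.R := D.base_sub hδ
  have htR : ∀ γ ∈ t, γ ∈ D.R := by
    intro γ h
    rcases ht γ h with h' | h' <;> (subst h'; assumption)
  set A := D.reflAut hαR with hAdef
  set B := D.reflAut hδR with hBdef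
  have hAcoe : ⇑A = D.refl α := rfl
  have hBcoe : ⇑B = D.refl δ := rfl
  have hA2 : A * A = 1 := by
    ext x
    show D.refl α (D.refl α x) = x
    exact D.refl_involutive hαR x
  have hB2 : B * B = 1 := by
    ext x
    show D.refl δ (D.refl δ x) = x
    exact D.refl_involutive hδR x
  have hAinv : A⁻¹ = A := by
    rw [← mul_one A⁻¹, ← hA2, ← mul_assoc, inv_mul_cancel, one_mul]
  have hBinv : B⁻¹ = B := by
    rw [← mul_one B⁻¹, ← hB2, ← mul_assoc, inv_mul_cancel, one_mul]
  set z := A * B with hzdef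
  have hzinv : z⁻¹ = B * A := by rw [hzdef, mul_inv_rev, hAinv, hBinv]
  have hAzA : A * z * A = z⁻¹ := by
    rw [hzdef, hzinv, ← mul_assoc A A B, hA2, one_mul]
  have hconjA : ∀ j : ℤ, A * z ^ j * A = z ^ (-j) := by
    intro j
    have h1 : (MulAut.conj A) (z ^ j) = ((MulAut.conj A) z) ^ j := map_zpow _ _ _
    have h2 : (MulAut.conj A) z = z⁻¹ := by
      rw [MulAut.conj_apply, hAinv]
      exact hAzA
    rw [h2] at h1
    have h3 : A * z ^ j * A⁻¹ = (z⁻¹) ^ j := h1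
    rw [hAinv] at h3
    rw [h3, inv_zpow, zpow_neg]
  -- normal form for words in {α, δ}
  have hnf : ∀ (s : List X), (∀ γ ∈ s, γ = α ∨ γ = δ) →
      ∃ j : ℤ, D.word s = ⇑(z ^ j) ∨ D.word s = ⇑(z ^ j * A) := by
    intro s
    induction s with
    | nil =>
      intro _
      exact ⟨0, Or.inl (by rw [zpow_zero]; rfl)⟩
    | cons γ s' ih =>
      intro hs
      obtain ⟨j, hj⟩ := ih (fun γ' h => hs γ' (List.mem_cons_of_mem _ h))
      have hγcase := hs γ (List.mem_cons_self)
      have hcons : D.word (γ :: s') = D.word s' ∘ D.refl γ := D.word_cons γ s'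
      rcases hj with hj | hj
      · rcases hγcase with h | h
        · subst h
          refine ⟨j, Or.inr ?_⟩
          funext x
          rw [word_apply_cons, hj]
          rfl
        · subst h
          have hw' : D.word (γ :: s') = ⇑(z ^ j * B) := by
            funext x
            rw [word_apply_cons, hj]
            rfl
          have gid : z ^ j * B = z ^ (j - 1) * A := by
            have hBz : B = z⁻¹ * A := by
              rw [hzinv, mul_assoc, hA2, mul_one]
            rw [hBz, ← mul_assoc, zpow_sub_one]
          rw [gid] at hw'
          exact ⟨j - 1, Or.inr hw'⟩
      · rcases hγcase with h | h
        · subst h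
          have hw' : D.word (γ :: s') = ⇑(z ^ j * A * A) := by
            funext x
            rw [word_apply_cons, hj]
            rfl
          have gid : z ^ j * A * A = z ^ j := by rw [mul_assoc, hA2, mul_one]
          rw [gid] at hw'
          exact ⟨j, Or.inl hw'⟩
        · subst h
          have hw' : D.word (γ :: s') = ⇑(z ^ j * A * B) := by
            funext x
            rw [word_apply_cons, hj]
            rfl
          have gid : z ^ j * A * B = z ^ (j + 1) := by
            rw [mul_assoc, ← hzdef, zpow_add_one]
          rw [gid] at hw'
          exact ⟨j + 1, Or.inl hw'⟩
  obtain ⟨j, hV⟩ := hnf t ht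
  -- the conjugation relation
  have hrel : ∀ (V : AddAut X), ⇑V = D.word t → V * A * V⁻¹ = B := by
    intro V hVw
    have hfun : ⇑(V * A * V⁻¹) = ⇑B := by
      funext x
      show V (A (V⁻¹ x)) = B x
      rw [D.coe_inv_of_coe_word htR hVw]
      show V (A (D.word t.reverse x)) = B x
      rw [show (V : X → X) = D.word t from hVw]
      have := D.refl_word htR hαR x
      rw [hconj] at this
      rw [hBcoe, this]
      rfl
    exact DFunLike.coe_injective hfun
  have hzz : z ^ (2 * j + 1) = 1 := by
    have hVAV : ∀ (V : AddAut X), ⇑V = D.word t → V * A * V⁻¹ = z ^ (2 * j) * A := by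
      intro V hVw
      have h5 : A * z ^ (-j) * A = z ^ j := by
        have := hconjA (-j)
        rwa [neg_neg] at this
      have h4 : A * z ^ (-j) = z ^ j * A := by
        calc A * z ^ (-j) = A * z ^ (-j) * A * A := by rw [mul_assoc, hA2, mul_one]
          _ = z ^ j * A := by rw [h5]
      have hjj : z ^ j * z ^ j = z ^ (2 * j) := by
        rw [← zpow_add]
        congr 1
        ring
      rcases hV with h | h
      · have hVz : V = z ^ j := DFunLike.coe_injective (hVw.trans h)
        subst hVz
        rw [← zpow_neg, mul_assoc, h4, ← mul_assoc, hjj]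
      · have hVz : V = z ^ j * A := DFunLike.coe_injective (hVw.trans h)
        subst hVz
        rw [mul_inv_rev, hAinv, ← zpow_neg]
        have hh : z ^ j * A * A * (A * z ^ (-j)) = z ^ j * (A * z ^ (-j)) := by
          rw [mul_assoc (z ^ j) A A, hA2, mul_one]
        rw [hh, h4, ← mul_assoc, hjj]
    -- combine
    obtain ⟨V, hVw⟩ : ∃ V : AddAut X, ⇑V = D.word t := by
      rcases hV with h | h
      · exact ⟨z ^ j, h.symm⟩
      · exact ⟨z ^ j * A, h.symm⟩
    have h5 : z ^ (2 * j) * A = B := by rw [← hVAV V hVw, hrel V hVw]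
    have h6 : B = z⁻¹ * A := by rw [hzinv, mul_assoc, hA2, mul_one]
    rw [h6] at h5
    have h7 : z ^ (2 * j) = z⁻¹ := mul_right_cancel h5
    have : z ^ (2 * j) * z = 1 := by rw [h7, inv_mul_cancel]
    rw [← zpow_add_one] at this
    exact this
  -- conclude oddness
  have hodd : Odd (2 * j + 1) := ⟨j, by ring⟩
  set n := (2 * j + 1).natAbs with hn
  have hnodd : Odd n := Int.natAbs_odd.mpr hodd
  have hnpos : n ≠ 0 := by
    intro h
    rw [hn] at h
    omega
  have hzn : z ^ n = 1 := by
    rcases Int.natAbs_eq (2 * j + 1) with h | h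
    · have : z ^ ((n : ℤ)) = 1 := by rw [← h]; exact hzz
      rwa [zpow_natCast] at this
    · have : z ^ ((n : ℤ)) = 1 := by
        have h2 : ((n : ℤ)) = -(2 * j + 1) := by omega
        rw [h2, zpow_neg, hzz, inv_one]
      rwa [zpow_natCast] at this
  have hdvd : orderOf z ∣ n := orderOf_dvd_of_pow_eq_one hzn
  obtain ⟨m, hm⟩ := hdvd
  rw [hm] at hnodd
  exact (Nat.odd_mul.mp hnodd).1


/-! ### Conjugate simple roots have equal parameters (Deodhar-type theorem) -/

lemma c_eq_of_word {k : Type*} [Field k] (c : X → k)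
    (hcodd : ∀ δ, ∀ hδ : δ ∈ D.base, ∀ ε, ∀ hε : ε ∈ D.base,
        Odd (orderOf (D.reflAut (D.base_sub hδ) * D.reflAut (D.base_sub hε))) →
        c δ = c ε) :
    ∀ (N : ℕ) (l : List X), (∀ γ ∈ l, γ ∈ D.base) → D.len (D.word l) ≤ N →
      ∀ {α β : X}, α ∈ D.base → β ∈ D.base → D.word l α = β → c α = c β := by
  intro N
  induction N with
  | zero =>
    intro l hl hlen α β hα hβ hw
    have hid : D.word l = id := D.word_eq_id_of_len_zero hl (Nat.le_zero.mp hlen)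
    rw [hid] at hw
    rw [show α = β from hw]
  | succ N ih =>
    intro l hl hlen α β hα hβ hw
    classical
    by_cases hid : D.word l = id
    · rw [hid] at hw
      rw [show α = β from hw]
    have hαR : α ∈ D.R := D.base_sub hα
    have hβR : β ∈ D.R := D.base_sub hβ
    obtain ⟨δ, hδ, hδneg⟩ := D.exists_neg_of_ne_id hl hid
    have hδR : δ ∈ D.R := D.base_sub hδ
    have hβpos : D.IsPos β := D.isPos_base hβ
    have hδα : δ ≠ α := by
      rintro rfl
      rw [hw] at hδneg
      exact D.not_pos_and_neg hβR ⟨hβpos, hδneg⟩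
    have hαδ : α ≠ δ := fun h => hδα h.symm
    -- the minimal coset representative u
    have hmem : D.len (D.word l) ∈ {n | ∃ t : List X, (∀ γ ∈ t, γ = α ∨ γ = δ) ∧
        n = D.len (D.word (t ++ l))} := ⟨[], by simp, by simp⟩
    obtain ⟨t₀, ht₀, ht₀len⟩ := Nat.sInf_mem ⟨_, hmem⟩
    have ht₀base : ∀ γ ∈ t₀, γ ∈ D.base := by
      intro γ h
      rcases ht₀ γ h with h' | h' <;> (subst h'; assumption)
    have ht₀R : ∀ γ ∈ t₀, γ ∈ D.R := fun γ h => D.base_sub (ht₀base γ h)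
    have ht₀l : ∀ γ ∈ t₀ ++ l, γ ∈ D.base := by
      intro γ h
      rcases List.mem_append.mp h with h' | h'
      · exact ht₀base γ h'
      · exact hl γ h'
    have humin : ∀ (t : List X), (∀ γ ∈ t, γ = α ∨ γ = δ) →
        D.len (D.word (t₀ ++ l)) ≤ D.len (D.word (t ++ l)) := by
      intro t ht
      rw [← ht₀len]
      exact Nat.sInf_le ⟨t, ht, rfl⟩
    -- u α, u δ are positive
    have hupos : ∀ ε : X, (ε = α ∨ ε = δ) → D.IsPos (D.word (t₀ ++ l) ε) := by
      intro ε hεcase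
      have hεb : ε ∈ D.base := by rcases hεcase with h | h <;> (subst h; assumption)
      have hεR : ε ∈ D.R := D.base_sub hεb
      have hroot : D.word (t₀ ++ l) ε ∈ D.R :=
        D.word_root_mem (fun a ha => D.base_sub (ht₀l a ha)) hεR
      rcases D.root_dichotomy hroot with h | h
      · exact h
      exfalso
      have hdesc := D.len_descent ht₀l hεb h
      have hcomp : D.word (t₀ ++ l) ∘ D.refl ε = D.word ((ε :: t₀) ++ l) := by
        rw [List.cons_append, word_cons]
      rw [hcomp] at hdesc
      have := humin (ε :: t₀) (by
        intro γ hγ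
        rcases List.mem_cons.mp hγ with h' | h'
        · exact h' ▸ hεcase
        · exact ht₀ γ h')
      omega
    -- length decreases
    have hlt : D.len (D.word (t₀ ++ l)) + 1 ≤ D.len (D.word l) := by
      have h1 := humin [δ] (by simp)
      have h2 : D.word ([δ] ++ l) = D.word l ∘ D.refl δ := by
        rw [List.singleton_append, word_cons]
      have h3 := D.len_descent hl hδ hδneg
      rw [h2] at h1
      omega
    have hlenu : D.len (D.word (t₀ ++ l)) ≤ N := by omega
    -- w = u ∘ v
    have hw_uv : ∀ x : X, D.word l x = D.word (t₀ ++ l) (D.word t₀.reverse x) := by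
      intro x
      rw [word_append]
      show D.word l x = D.word l (D.word t₀ (D.word t₀.reverse x))
      rw [D.word_cancel ht₀R x]
    have hrevletters : ∀ γ ∈ t₀.reverse, γ = α ∨ γ = δ :=
      fun γ h => ht₀ γ (List.mem_reverse.mp h)
    obtain ⟨m', n', hvα⟩ := D.word_span t₀.reverse hrevletters α
    have hvαR : D.word t₀.reverse α ∈ D.R :=
      D.word_root_mem (fun γ h => D.base_sub (by
        rcases hrevletters γ h with h' | h' <;> (subst h'; assumption))) hαR
    -- positivity witnesses for u α and u δ
    obtain ⟨A, hA⟩ := hupos α (Or.inl rfl)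
    obtain ⟨Bc, hB⟩ := hupos δ (Or.inr rfl)
    have huαR : D.word (t₀ ++ l) α ∈ D.R :=
      D.word_root_mem (fun a ha => D.base_sub (ht₀l a ha)) hαR
    have huδR : D.word (t₀ ++ l) δ ∈ D.R :=
      D.word_root_mem (fun a ha => D.base_sub (ht₀l a ha)) hδR
    have hsA : 0 < ∑ a ∈ D.base, A a := by
      rcases Nat.eq_zero_or_pos (∑ a ∈ D.base, A a) with h | h
      · exfalso
        apply D.root_ne_zero huαR
        rw [hA]
        apply Finset.sum_eq_zero
        intro a ha
        have : A a = 0 := by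
          have := (Finset.sum_eq_zero_iff).mp h a ha
          omega
        simp [this]
      · exact h
    have hsB : 0 < ∑ a ∈ D.base, Bc a := by
      rcases Nat.eq_zero_or_pos (∑ a ∈ D.base, Bc a) with h | h
      · exfalso
        apply D.root_ne_zero huδR
        rw [hB]
        apply Finset.sum_eq_zero
        intro a ha
        have : Bc a = 0 := by
          have := (Finset.sum_eq_zero_iff).mp h a ha
          omega
        simp [this]
      · exact h
    rcases D.root_dichotomy hvαR with hPos | hNeg
    · -- v α is positive
      obtain ⟨cc, hcc⟩ := hPos
      -- coefficients of v α are supported on {α, δ}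
      have hccform : ∀ a ∈ D.base, (cc a : ℤ)
          = (if a = α then 1 + m' else if a = δ then n' else 0) := by
        apply D.coeff_unique
        rw [D.two_coeff_sum hα hδ hαδ, ← hcc, hvα]
        module
      have hvα2 : D.word t₀.reverse α = (cc α : ℤ) • α + (cc δ : ℤ) • δ := by
        rw [hcc]
        apply D.sum_eq_two_support hα hδ hαδ
        intro a ha h1 h2
        rw [hccform a ha, if_neg h1, if_neg h2]
      -- β as a combination of u α and u δ
      have hβcomb : β = (cc α : ℤ) • D.word (t₀ ++ l) α + (cc δ : ℤ) • D.word (t₀ ++ l) δ := by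
        rw [← hw, hw_uv α, hvα2, D.word_add, D.word_zsmul, D.word_zsmul]
      have hexp : ∑ a ∈ D.base, ((cc α : ℤ) * (A a : ℤ) + (cc δ : ℤ) * (Bc a : ℤ)) • a
          = (cc α : ℤ) • D.word (t₀ ++ l) α + (cc δ : ℤ) • D.word (t₀ ++ l) δ := by
        rw [hA, hB, Finset.smul_sum, Finset.smul_sum, ← Finset.sum_add_distrib]
        apply Finset.sum_congr rfl
        intro a _
        rw [add_smul, smul_smul, smul_smul]
      have hcoefβ : ∀ a ∈ D.base,
          (cc α : ℤ) * (A a : ℤ) + (cc δ : ℤ) * (Bc a : ℤ)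
            = ((if a = β then 1 else 0 : ℕ) : ℤ) := by
        apply D.coeff_unique
        rw [hexp, ← hβcomb, ← D.base_indicator hβ]
      have hcoefβ' : ∀ a ∈ D.base,
          cc α * A a + cc δ * Bc a = (if a = β then 1 else 0) := by
        intro a ha
        have := hcoefβ a ha
        split_ifs at this ⊢ <;> omega
      have hsum1 : cc α * (∑ a ∈ D.base, A a) + cc δ * (∑ a ∈ D.base, Bc a) = 1 := by
        rw [Finset.mul_sum, Finset.mul_sum, ← Finset.sum_add_distrib,
          Finset.sum_congr rfl hcoefβ', Finset.sum_ite_eq' D.base β (fun _ => 1),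
          if_pos hβ]
      -- case analysis on the coefficients
      rcases Nat.eq_zero_or_pos (cc α) with hccα | hccα
      · -- then cc δ = 1 and u δ = β, v α = δ
        have hccδ : cc δ = 1 ∧ (∑ a ∈ D.base, Bc a) = 1 := by
          rw [hccα, zero_mul, zero_add] at hsum1
          constructor
          · exact Nat.eq_one_of_mul_eq_one_right hsum1
          · exact Nat.eq_one_of_mul_eq_one_left hsum1
        have hvαδ : D.word t₀.reverse α = δ := by
          rw [hvα2, hccα, hccδ.1]
          simp
        have huδβ : D.word (t₀ ++ l) δ = β := by
          rw [hB, D.base_indicator hβ]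
          apply Finset.sum_congr rfl
          intro a ha
          have := hcoefβ' a ha
          rw [hccα, hccδ.1] at this
          congr 1
          split_ifs at this ⊢ <;> omega
        have hcαδ : c α = c δ :=
          hcodd α hα δ hδ (D.odd_order_of_dihedral_conj hα hδ hrevletters hvαδ)
        have hcδβ : c δ = c β := ih (t₀ ++ l) ht₀l hlenu hδ hβ huδβ
        rw [hcαδ, hcδβ]
      · -- then cc α = 1 and u α = β
        have h2 : cc δ * (∑ a ∈ D.base, Bc a) = 0 ∧ cc α * (∑ a ∈ D.base, A a) = 1 := by
          constructor <;> nlinarith [hsA, hsB, hsum1]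
        have hccδ0 : cc δ = 0 := by
          rcases Nat.mul_eq_zero.mp h2.1 with h | h
          · exact h
          · omega
        have hccα1 : cc α = 1 := Nat.eq_one_of_mul_eq_one_right h2.2
        have huαβ : D.word (t₀ ++ l) α = β := by
          rw [hA, D.base_indicator hβ]
          apply Finset.sum_congr rfl
          intro a ha
          have := hcoefβ' a ha
          rw [hccα1, hccδ0] at this
          congr 1
          split_ifs at this ⊢ <;> omega
        exact ih (t₀ ++ l) ht₀l hlenu hα hβ huαβ
    · -- v α is negative: contradiction
      exfalso
      obtain ⟨cc, hcc⟩ := hNeg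
      have hccform : ∀ a ∈ D.base, (cc a : ℤ)
          = (if a = α then -1 - m' else if a = δ then -n' else 0) := by
        apply D.coeff_unique
        rw [D.two_coeff_sum hα hδ hαδ, ← hcc, hvα]
        module
      have hvα2 : D.word t₀.reverse α = -((cc α : ℤ) • α + (cc δ : ℤ) • δ) := by
        rw [← neg_eq_iff_eq_neg, hcc]
        apply D.sum_eq_two_support hα hδ hαδ
        intro a ha h1 h2
        rw [hccform a ha, if_neg h1, if_neg h2]
      have hβcomb : β = -((cc α : ℤ) • D.word (t₀ ++ l) α
          + (cc δ : ℤ) • D.word (t₀ ++ l) δ) := by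
        rw [← hw, hw_uv α, hvα2, D.word_neg, D.word_add, D.word_zsmul, D.word_zsmul]
      have hexp : ∑ a ∈ D.base, ((cc α : ℤ) * (A a : ℤ) + (cc δ : ℤ) * (Bc a : ℤ)) • a
          = (cc α : ℤ) • D.word (t₀ ++ l) α + (cc δ : ℤ) • D.word (t₀ ++ l) δ := by
        rw [hA, hB, Finset.smul_sum, Finset.smul_sum, ← Finset.sum_add_distrib]
        apply Finset.sum_congr rfl
        intro a _
        rw [add_smul, smul_smul, smul_smul]
      have h0 : ∑ a ∈ D.base, (((if a = β then 1 else 0 : ℕ) : ℤ)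
          + (cc α : ℤ) * (A a : ℤ) + (cc δ : ℤ) * (Bc a : ℤ)) • a = 0 := by
        have hsplit : ∀ a ∈ D.base, (((if a = β then 1 else 0 : ℕ) : ℤ)
            + (cc α : ℤ) * (A a : ℤ) + (cc δ : ℤ) * (Bc a : ℤ)) • a
            = ((if a = β then 1 else 0 : ℕ) : ℤ) • a
              + ((cc α : ℤ) * (A a : ℤ) + (cc δ : ℤ) * (Bc a : ℤ)) • a := by
          intro a _
          rw [add_assoc, add_smul]
        rw [Finset.sum_congr rfl hsplit, Finset.sum_add_distrib, ← D.base_indicator hβ,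
          hexp, hβcomb]
        abel
      have := D.coeff_zero _ h0 β hβ
      rw [if_pos rfl] at this
      have h1 : (0:ℤ) ≤ (cc α : ℤ) * (A β : ℤ) := by positivity
      have h2 : (0:ℤ) ≤ (cc δ : ℤ) * (Bc β : ℤ) := by positivity
      omega


/-! ### The `W`-invariant extension of the parameters and the parity invariant -/

section Params

variable {k : Type*} [Field k]

open Classical in
/-- Extension of the parameter function `c` to roots conjugate to simple roots. -/
noncomputable def ctil (c : X → k) (γ : X) : k :=
  if h : ∃ p : List X × X, (∀ x ∈ p.1, x ∈ D.base) ∧ p.2 ∈ D.base ∧ D.word p.1 p.2 = γ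
  then c h.choose.2 else 0

variable {c : X → k}

lemma ctil_eq
    (hcodd : ∀ δ, ∀ hδ : δ ∈ D.base, ∀ ε, ∀ hε : ε ∈ D.base,
        Odd (orderOf (D.reflAut (D.base_sub hδ) * D.reflAut (D.base_sub hε))) → c δ = c ε)
    {l : List X} (hl : ∀ γ' ∈ l, γ' ∈ D.base) {α : X} (hα : α ∈ D.base)
    {γ : X} (hγ : D.word l α = γ) : D.ctil c γ = c α := by
  have hex : ∃ p : List X × X, (∀ x ∈ p.1, x ∈ D.base) ∧ p.2 ∈ D.base ∧
      D.word p.1 p.2 = γ := ⟨(l, α), hl, hα, hγ⟩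
  unfold ctil
  rw [dif_pos hex]
  obtain ⟨h1, h2, h3⟩ := hex.choose_spec
  have hword : D.word (hex.choose.1 ++ l.reverse) hex.choose.2 = α := by
    rw [word_append]
    show D.word l.reverse (D.word hex.choose.1 hex.choose.2) = α
    rw [h3, ← hγ]
    exact D.word_rev_cancel (fun x hx => D.base_sub (hl x hx)) α
  exact D.c_eq_of_word c hcodd _ _ (by
    intro x hx
    rcases List.mem_append.mp hx with h | h
    · exact h1 x h
    · exact hl x (List.mem_reverse.mp h)) (le_refl _) h2 hα hword

lemma ctil_base
    (hcodd : ∀ δ, ∀ hδ : δ ∈ D.base, ∀ ε, ∀ hε : ε ∈ D.base,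
        Odd (orderOf (D.reflAut (D.base_sub hδ) * D.reflAut (D.base_sub hε))) → c δ = c ε)
    {α : X} (hα : α ∈ D.base) : D.ctil c α = c α :=
  D.ctil_eq hcodd (l := []) (by simp) hα rfl

lemma ctil_word
    (hcodd : ∀ δ, ∀ hδ : δ ∈ D.base, ∀ ε, ∀ hε : ε ∈ D.base,
        Odd (orderOf (D.reflAut (D.base_sub hδ) * D.reflAut (D.base_sub hε))) → c δ = c ε)
    {l : List X} (hl : ∀ γ' ∈ l, γ' ∈ D.base) (γ : X) :
    D.ctil c (D.word l γ) = D.ctil c γ := by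
  by_cases h : ∃ p : List X × X, (∀ x ∈ p.1, x ∈ D.base) ∧ p.2 ∈ D.base ∧
      D.word p.1 p.2 = γ
  · obtain ⟨⟨t, a⟩, ht, ha, hw⟩ := h
    have h1 : D.ctil c γ = c a := D.ctil_eq hcodd ht ha hw
    have h2 : D.word (t ++ l) a = D.word l γ := by
      rw [word_append]
      show D.word l (D.word t a) = _
      rw [hw]
    have h3 : D.ctil c (D.word l γ) = c a := D.ctil_eq hcodd (by
      intro x hx
      rcases List.mem_append.mp hx with h' | h'
      · exact ht x h'
      · exact hl x h') ha h2
    rw [h1, h3]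
  · have h2 : ¬ ∃ p : List X × X, (∀ x ∈ p.1, x ∈ D.base) ∧ p.2 ∈ D.base ∧
        D.word p.1 p.2 = D.word l γ := by
      rintro ⟨⟨t, a⟩, ht, ha, hw⟩
      apply h
      refine ⟨(t ++ l.reverse, a), ?_, ha, ?_⟩
      · intro x hx
        rcases List.mem_append.mp hx with h' | h'
        · exact ht x h'
        · exact hl x (List.mem_reverse.mp h')
      · show D.word (t ++ l.reverse) a = γ
        rw [word_append]
        show D.word l.reverse (D.word t a) = γ
        rw [hw]
        exact D.word_rev_cancel (fun x hx => D.base_sub (hl x hx)) γ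
    unfold ctil
    rw [dif_neg h, dif_neg h2]

lemma ctil_neg
    (hcodd : ∀ δ, ∀ hδ : δ ∈ D.base, ∀ ε, ∀ hε : ε ∈ D.base,
        Odd (orderOf (D.reflAut (D.base_sub hδ) * D.reflAut (D.base_sub hε))) → c δ = c ε)
    (γ : X) : D.ctil c (-γ) = D.ctil c γ := by
  have hkey : ∀ γ' : X, (∃ p : List X × X, (∀ x ∈ p.1, x ∈ D.base) ∧ p.2 ∈ D.base ∧
      D.word p.1 p.2 = γ') → ∃ p : List X × X, (∀ x ∈ p.1, x ∈ D.base) ∧ p.2 ∈ D.base ∧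
      D.word p.1 p.2 = -γ' := by
    rintro γ' ⟨⟨t, a⟩, ht, ha, hw⟩
    refine ⟨(a :: t, a), ?_, ha, ?_⟩
    · intro x hx
      rcases List.mem_cons.mp hx with h' | h'
      · exact h' ▸ ha
      · exact ht x h'
    · show D.word (a :: t) a = -γ'
      rw [word_apply_cons, D.refl_self (D.base_sub ha), D.word_neg]
      show -(D.word t a) = -γ'
      rw [hw]
  by_cases h : ∃ p : List X × X, (∀ x ∈ p.1, x ∈ D.base) ∧ p.2 ∈ D.base ∧
      D.word p.1 p.2 = γ
  · obtain ⟨⟨t, a⟩, ht, ha, hw⟩ := h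
    rw [D.ctil_eq hcodd ht ha hw]
    obtain ⟨⟨t', a'⟩, ht', ha', hw'⟩ := hkey γ ⟨(t, a), ht, ha, hw⟩
    rw [D.ctil_eq hcodd ht' ha' hw']
    -- c a' = c a  : both present γ up to sign
    have : D.word (a' :: t') a' = γ := by
      rw [word_apply_cons, D.refl_self (D.base_sub ha'), D.word_neg]
      show -(D.word t' a') = γ
      rw [hw', neg_neg]
    have h1 : D.ctil c γ = c a' := D.ctil_eq hcodd (by
      intro x hx
      rcases List.mem_cons.mp hx with h' | h'
      · exact h' ▸ ha'
      · exact ht' x h') ha' this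
    have h2 : D.ctil c γ = c a := D.ctil_eq hcodd ht ha hw
    rw [← h1, h2]
  · have h2 : ¬ ∃ p : List X × X, (∀ x ∈ p.1, x ∈ D.base) ∧ p.2 ∈ D.base ∧
        D.word p.1 p.2 = -γ := by
      intro hc
      apply h
      have := hkey (-γ) hc
      rwa [neg_neg] at this
    unfold ctil
    rw [dif_neg h, dif_neg h2]

open Classical in
/-- The sign of a root. -/
noncomputable def absR (x : X) : X := if D.IsPos x then x else -x

lemma absR_mem {x : X} (hx : x ∈ D.R) : D.absR x ∈ D.R := by
  unfold absR
  split
  · exact hx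
  · exact D.neg_root_mem hx

lemma absR_pos {x : X} (hx : x ∈ D.R) : D.IsPos (D.absR x) := by
  unfold absR
  split
  · assumption
  · rename_i h
    exact (D.root_dichotomy hx).resolve_left h

lemma absR_eq_of_pos {x : X} (h : D.IsPos x) : D.absR x = x := if_pos h

lemma absR_eq_neg_of_neg {x : X} (hx : x ∈ D.R) (h : D.IsNeg x) : D.absR x = -x := by
  unfold absR
  rw [if_neg]
  intro hp
  exact D.not_pos_and_neg hx ⟨hp, h⟩

open Classical in
/-- The parity invariant: number (mod 2) of positive roots `γ` made negative by `w` with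
`lam γ = ± c γ`. -/
noncomputable def Fdeg (c : X → k) (lam : X → k) (w : X → X) : ZMod 2 :=
  ∑ γ ∈ D.R, if D.IsPos γ ∧ (lam γ = D.ctil c γ ∨ lam γ = - D.ctil c γ) ∧ D.IsNeg (w γ)
    then 1 else 0

lemma Fdeg_id (lam : X → k) : D.Fdeg c lam id = 0 := by
  unfold Fdeg
  apply Finset.sum_eq_zero
  intro γ hγ
  rw [if_neg]
  rintro ⟨h1, _, h3⟩
  exact D.not_pos_and_neg hγ ⟨h1, h3⟩

open Classical in
lemma Fdeg_refl {δ : X} (hδ : δ ∈ D.base) (lam : X → k) :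
    D.Fdeg c lam (D.refl δ)
      = if (lam δ = D.ctil c δ ∨ lam δ = - D.ctil c δ) then 1 else 0 := by
  unfold Fdeg
  rw [Finset.sum_eq_single_of_mem δ (D.base_sub hδ)]
  · have h1 : D.IsPos δ := D.isPos_base hδ
    have h2 : D.IsNeg (D.refl δ δ) := by
      rw [D.refl_self (D.base_sub hδ)]
      unfold IsNeg
      rwa [neg_neg]
    by_cases hP : (lam δ = D.ctil c δ ∨ lam δ = - D.ctil c δ)
    · rw [if_pos ⟨h1, hP, h2⟩, if_pos hP]
    · rw [if_neg (fun hc => hP hc.2.1), if_neg hP]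
  · intro γ hγ hne
    rw [if_neg]
    rintro ⟨hp, _, hneg⟩
    exact hne (D.eq_of_pos_neg_refl hδ hγ hp hneg)

lemma pm_neg_iff {u v : k} : (-u = v ∨ -u = -v) ↔ (u = v ∨ u = -v) := by
  constructor
  · rintro (h | h)
    · exact Or.inr (by rw [← h, neg_neg])
    · exact Or.inl (neg_injective h)
  · rintro (h | h)
    · exact Or.inr (by rw [h])
    · exact Or.inl (by rw [h, neg_neg])

lemma Fdeg_comp
    (hcodd : ∀ δ, ∀ hδ : δ ∈ D.base, ∀ ε, ∀ hε : ε ∈ D.base,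
        Odd (orderOf (D.reflAut (D.base_sub hδ) * D.reflAut (D.base_sub hε))) → c δ = c ε)
    (lam : X → k) (hlam : ∀ x, lam (-x) = - lam x)
    {la lb : List X} (hla : ∀ γ ∈ la, γ ∈ D.base) (hlb : ∀ γ ∈ lb, γ ∈ D.base) :
    D.Fdeg c lam (fun x => D.word lb (D.word la x))
      = D.Fdeg c lam (D.word la)
        + D.Fdeg c (fun x => lam (D.word la.reverse x)) (D.word lb) := by
  classical
  have hlaR : ∀ γ ∈ la, γ ∈ D.R := fun γ h => D.base_sub (hla γ h)
  have hlbR : ∀ γ ∈ lb, γ ∈ D.R := fun γ h => D.base_sub (hlb γ h)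
  have hlaRrev : ∀ γ ∈ la.reverse, γ ∈ D.R := fun γ h => hlaR γ (List.mem_reverse.mp h)
  -- termwise split
  have hterm : ∀ γ ∈ D.R,
      (if D.IsPos γ ∧ (lam γ = D.ctil c γ ∨ lam γ = - D.ctil c γ)
          ∧ D.IsNeg (D.word lb (D.word la γ)) then (1 : ZMod 2) else 0)
      = (if D.IsPos γ ∧ (lam γ = D.ctil c γ ∨ lam γ = - D.ctil c γ)
          ∧ D.IsNeg (D.word la γ) then (1 : ZMod 2) else 0)
        + (if D.IsPos γ ∧ (lam γ = D.ctil c γ ∨ lam γ = - D.ctil c γ)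
          ∧ D.IsNeg (D.word lb (D.absR (D.word la γ))) then (1 : ZMod 2) else 0) := by
    intro γ hγ
    by_cases hpos : D.IsPos γ
    · by_cases hP : (lam γ = D.ctil c γ ∨ lam γ = - D.ctil c γ)
      · have hwaR : D.word la γ ∈ D.R := D.word_root_mem hlaR hγ
        have hzR : D.word lb (D.word la γ) ∈ D.R := D.word_root_mem hlbR hwaR
        rcases D.root_dichotomy hwaR with hwp | hwn
        · have hnn : ¬ D.IsNeg (D.word la γ) := fun hc => D.not_pos_and_neg hwaR ⟨hwp, hc⟩
          rw [D.absR_eq_of_pos hwp]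
          have e2 : (if D.IsPos γ ∧ (lam γ = D.ctil c γ ∨ lam γ = - D.ctil c γ)
              ∧ D.IsNeg (D.word la γ) then (1 : ZMod 2) else 0) = 0 :=
            if_neg (fun hc => hnn hc.2.2)
          rw [e2, zero_add]
        · have habs : D.absR (D.word la γ) = -(D.word la γ) := D.absR_eq_neg_of_neg hwaR hwn
          rw [habs, D.word_neg]
          have e2 : (if D.IsPos γ ∧ (lam γ = D.ctil c γ ∨ lam γ = - D.ctil c γ)
              ∧ D.IsNeg (D.word la γ) then (1 : ZMod 2) else 0) = 1 :=
            if_pos ⟨hpos, hP, hwn⟩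
          rcases D.root_dichotomy hzR with hzp | hzn
          · have hn1 : ¬ D.IsNeg (D.word lb (D.word la γ)) :=
              fun hc => D.not_pos_and_neg hzR ⟨hzp, hc⟩
            have hp2 : D.IsNeg (-(D.word lb (D.word la γ))) := by
              unfold IsNeg
              rwa [neg_neg]
            have e1 : (if D.IsPos γ ∧ (lam γ = D.ctil c γ ∨ lam γ = - D.ctil c γ)
                ∧ D.IsNeg (D.word lb (D.word la γ)) then (1 : ZMod 2) else 0) = 0 :=
              if_neg (fun hc => hn1 hc.2.2)
            have e3 : (if D.IsPos γ ∧ (lam γ = D.ctil c γ ∨ lam γ = - D.ctil c γ)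
                ∧ D.IsNeg (-(D.word lb (D.word la γ))) then (1 : ZMod 2) else 0) = 1 :=
              if_pos ⟨hpos, hP, hp2⟩
            rw [e1, e2, e3]
            decide
          · have hn3 : ¬ D.IsNeg (-(D.word lb (D.word la γ))) := by
              intro hc
              unfold IsNeg at hc
              rw [neg_neg] at hc
              exact D.not_pos_and_neg hzR ⟨hc, hzn⟩
            have e1 : (if D.IsPos γ ∧ (lam γ = D.ctil c γ ∨ lam γ = - D.ctil c γ)
                ∧ D.IsNeg (D.word lb (D.word la γ)) then (1 : ZMod 2) else 0) = 1 :=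
              if_pos ⟨hpos, hP, hzn⟩
            have e3 : (if D.IsPos γ ∧ (lam γ = D.ctil c γ ∨ lam γ = - D.ctil c γ)
                ∧ D.IsNeg (-(D.word lb (D.word la γ))) then (1 : ZMod 2) else 0) = 0 :=
              if_neg (fun hc => hn3 hc.2.2)
            rw [e1, e2, e3]
            decide
      · rw [if_neg (fun hc => hP hc.2.1), if_neg (fun hc => hP hc.2.1),
          if_neg (fun hc => hP hc.2.1), add_zero]
    · rw [if_neg (fun hc => hpos hc.1), if_neg (fun hc => hpos hc.1),
        if_neg (fun hc => hpos hc.1), add_zero]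
  unfold Fdeg
  rw [Finset.sum_congr rfl hterm, Finset.sum_add_distrib]
  congr 1
  -- reindex the second sum
  calc ∑ γ ∈ D.R, (if D.IsPos γ ∧ (lam γ = D.ctil c γ ∨ lam γ = - D.ctil c γ)
          ∧ D.IsNeg (D.word lb (D.absR (D.word la γ))) then (1 : ZMod 2) else 0)
      = ∑ γ ∈ D.R.filter (fun a => D.IsPos a),
          (if (lam γ = D.ctil c γ ∨ lam γ = - D.ctil c γ)
            ∧ D.IsNeg (D.word lb (D.absR (D.word la γ))) then (1 : ZMod 2) else 0) := by
        rw [Finset.sum_filter]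
        apply Finset.sum_congr rfl
        intro γ _
        by_cases h : D.IsPos γ
        · by_cases h2 : (lam γ = D.ctil c γ ∨ lam γ = - D.ctil c γ)
            ∧ D.IsNeg (D.word lb (D.absR (D.word la γ)))
          · rw [if_pos ⟨h, h2.1, h2.2⟩, if_pos h, if_pos h2]
          · rw [if_neg (fun hc => h2 ⟨hc.2.1, hc.2.2⟩), if_pos h, if_neg h2]
        · rw [if_neg (fun hc => h hc.1), if_neg h]
    _ = ∑ ε ∈ D.R.filter (fun a => D.IsPos a),
          (if (lam (D.word la.reverse ε) = D.ctil c ε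
              ∨ lam (D.word la.reverse ε) = - D.ctil c ε)
            ∧ D.IsNeg (D.word lb ε) then (1 : ZMod 2) else 0) := by
        apply Finset.sum_nbij' (fun γ => D.absR (D.word la γ))
          (fun ε => D.absR (D.word la.reverse ε))
        · intro γ hγ
          obtain ⟨hγR, hγpos⟩ := Finset.mem_filter.mp hγ
          have h1 : D.word la γ ∈ D.R := D.word_root_mem hlaR hγR
          exact Finset.mem_filter.mpr ⟨D.absR_mem h1, D.absR_pos h1⟩
        · intro ε hε
          obtain ⟨hεR, hεpos⟩ := Finset.mem_filter.mp hε
          have h1 : D.word la.reverse ε ∈ D.R := D.word_root_mem hlaRrev hεR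
          exact Finset.mem_filter.mpr ⟨D.absR_mem h1, D.absR_pos h1⟩
        · intro γ hγ
          obtain ⟨hγR, hγpos⟩ := Finset.mem_filter.mp hγ
          have h1 : D.word la γ ∈ D.R := D.word_root_mem hlaR hγR
          rcases D.root_dichotomy h1 with h | h
          · rw [D.absR_eq_of_pos h, D.word_rev_cancel hlaR γ, D.absR_eq_of_pos hγpos]
          · rw [D.absR_eq_neg_of_neg h1 h, D.word_neg, D.word_rev_cancel hlaR γ]
            have hnegmem : -γ ∈ D.R := D.neg_root_mem hγR
            have hneg : D.IsNeg (-γ) := by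
              unfold IsNeg
              rwa [neg_neg]
            rw [D.absR_eq_neg_of_neg hnegmem hneg, neg_neg]
        · intro ε hε
          obtain ⟨hεR, hεpos⟩ := Finset.mem_filter.mp hε
          have h1 : D.word la.reverse ε ∈ D.R := D.word_root_mem hlaRrev hεR
          rcases D.root_dichotomy h1 with h | h
          · rw [D.absR_eq_of_pos h, D.word_cancel hlaR ε, D.absR_eq_of_pos hεpos]
          · rw [D.absR_eq_neg_of_neg h1 h, D.word_neg, D.word_cancel hlaR ε]
            have hnegmem : -ε ∈ D.R := D.neg_root_mem hεR
            have hneg : D.IsNeg (-ε) := by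
              unfold IsNeg
              rwa [neg_neg]
            rw [D.absR_eq_neg_of_neg hnegmem hneg, neg_neg]
        · intro γ hγ
          obtain ⟨hγR, hγpos⟩ := Finset.mem_filter.mp hγ
          have h1 : D.word la γ ∈ D.R := D.word_root_mem hlaR hγR
          apply if_congr _ rfl rfl
          apply and_congr _ Iff.rfl
          rcases D.root_dichotomy h1 with h | h
          · rw [D.absR_eq_of_pos h, D.word_rev_cancel hlaR γ, D.ctil_word hcodd hla γ]
          · rw [D.absR_eq_neg_of_neg h1 h, D.word_neg, D.word_rev_cancel hlaR γ, hlam,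
              D.ctil_neg hcodd, D.ctil_word hcodd hla γ]
            exact pm_neg_iff.symm
    _ = ∑ ε ∈ D.R, (if D.IsPos ε ∧ ((fun x => lam (D.word la.reverse x)) ε = D.ctil c ε
          ∨ (fun x => lam (D.word la.reverse x)) ε = - D.ctil c ε)
          ∧ D.IsNeg (D.word lb ε) then (1 : ZMod 2) else 0) := by
        rw [Finset.sum_filter]
        apply Finset.sum_congr rfl
        intro ε _
        by_cases h : D.IsPos ε
        · by_cases h2 : (lam (D.word la.reverse ε) = D.ctil c ε
              ∨ lam (D.word la.reverse ε) = - D.ctil c ε) ∧ D.IsNeg (D.word lb ε)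
          · rw [if_pos h, if_pos h2, if_pos ⟨h, h2.1, h2.2⟩]
          · rw [if_pos h, if_neg h2, if_neg (fun hc => h2 ⟨hc.2.1, hc.2.2⟩)]
        · rw [if_neg h, if_neg (fun hc => h hc.1)]

open Classical in
lemma step1
    (hcodd : ∀ δ, ∀ hδ : δ ∈ D.base, ∀ ε, ∀ hε : ε ∈ D.base,
        Odd (orderOf (D.reflAut (D.base_sub hδ) * D.reflAut (D.base_sub hε))) → c δ = c ε)
    (lam : X → k) (hlam : ∀ x, lam (-x) = - lam x) :
    ∀ (l : List X), (∀ γ ∈ l, γ ∈ D.base) →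
      (∑ i ∈ Finset.range l.length,
        if (lam (D.word ((l.take i).reverse) (l.getD i 0)) = c (l.getD i 0)
            ∨ lam (D.word ((l.take i).reverse) (l.getD i 0)) = - c (l.getD i 0))
        then (1 : ZMod 2) else 0)
      = D.Fdeg c lam (D.word l) := by
  intro l
  induction l using List.reverseRecOn with
  | nil =>
    intro _
    rw [List.length_nil, Finset.range_zero, Finset.sum_empty, word_nil, D.Fdeg_id]
  | append_singleton l δ ih =>
    intro hl
    have hlbase : ∀ γ ∈ l, γ ∈ D.base := fun γ h => hl γ (List.mem_append.mpr (Or.inl h))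
    have hδ : δ ∈ D.base := hl δ (List.mem_append.mpr (Or.inr (List.mem_singleton_self δ)))
    have hδlist : ∀ γ ∈ [δ], γ ∈ D.base := by
      intro γ h
      rw [List.mem_singleton.mp h]
      exact hδ
    have hwcomp : D.word (l ++ [δ]) = fun x => D.word [δ] (D.word l x) := by
      rw [word_append]
      rfl
    rw [hwcomp, D.Fdeg_comp hcodd lam hlam hlbase hδlist, ← ih hlbase]
    have h2 : D.Fdeg c (fun x => lam (D.word l.reverse x)) (D.word [δ])
        = if (lam (D.word l.reverse δ) = c δ ∨ lam (D.word l.reverse δ) = - c δ)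
          then (1 : ZMod 2) else 0 := by
      have hcoe : D.word [δ] = D.refl δ := rfl
      rw [hcoe, D.Fdeg_refl hδ, D.ctil_base hcodd hδ]
    rw [h2]
    have hlen : (l ++ [δ]).length = l.length + 1 := by
      rw [List.length_append, List.length_singleton]
    rw [hlen, Finset.sum_range_succ]
    congr 1
    · apply Finset.sum_congr rfl
      intro i hi
      have hi' : i < l.length := Finset.mem_range.mp hi
      have htake : (l ++ [δ]).take i = l.take i :=
        List.take_eq_left_iff.mpr (Or.inr (le_of_lt hi'))
      have hgetD : (l ++ [δ]).getD i 0 = l.getD i 0 := List.getD_append l [δ] 0 i hi'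
      rw [htake, hgetD]
    · have htake : (l ++ [δ]).take l.length = l := List.take_left
      have hgetD : (l ++ [δ]).getD l.length 0 = δ := by
        rw [List.getD_eq_getElem _ _ (by rw [hlen]; omega)]
        rw [List.getElem_append_right (le_refl l.length)]
        simp
      rw [htake, hgetD]

end Params

end RRDatum

/-- Let `(X,Y,R,Ř,Π)` be a reduced simply connected root datum, `k` a
field, `c : Π → k∖{0}` parameters with `c_α = c_β` whenever `m_{α,β}` is odd, and
`λ ∈ Hom_ℤ(X,k)` a parabolic weight (some `W`-translate of `λ` has stabilizer generated by
the simple reflections fixing it).  Then for every word `s_{α_m}⋯s_{α_1}` in simple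
reflections fixing `λ`, the number of indices `i` with
`λ(s_{α_1}⋯s_{α_{i−1}}(α_i)) = ±c_{α_i}` is even. -/
theorem parabolic_weight_even_degree
    {X Y : Type*} [AddCommGroup X] [AddCommGroup Y] (D : RRDatum X Y)
    -- simple connectedness: the fundamental weights lie in `X`
    (hsc : ∀ δ ∈ D.base, ∃ ω : X,
        (∃ nz : ℤ, nz ≠ 0 ∧ nz • ω ∈ Submodule.span ℤ (↑D.R : Set X)) ∧
        D.pair ω (D.coroot δ) = 1 ∧
        ∀ ε ∈ D.base, ε ≠ δ → D.pair ω (D.coroot ε) = 0)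
    {k : Type*} [Field k]
    -- the parameters `c`:
    (c : X → k) (hc0 : ∀ δ ∈ D.base, c δ ≠ 0)
    (hcodd : ∀ δ, ∀ hδ : δ ∈ D.base, ∀ ε, ∀ hε : ε ∈ D.base,
        Odd (orderOf (D.reflAut (D.base_sub hδ) * D.reflAut (D.base_sub hε))) →
        c δ = c ε)
    -- the Weyl group:
    (W : Subgroup (AddAut X))
    (hW : W = Subgroup.closure {w : AddAut X | ∃ δ ∈ D.base, ⇑w = D.refl δ})
    -- the weight `λ` and the parabolicity assumption:
    (lam : X →+ k)
    (hpar : ∃ u ∈ W,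
        W ⊓ addCharStabilizer (lam.comp (AddEquiv.toAddMonoidHom u⁻¹)) =
          Subgroup.closure {w : AddAut X | ∃ δ ∈ D.base, ⇑w = D.refl δ ∧
            ∀ x : X, lam (u⁻¹ (D.refl δ x)) = lam (u⁻¹ x)}) :
    ∀ (m : ℕ) (a : Fin m → X), (∀ i, a i ∈ D.base) →
      (∀ x : X, lam (D.word (List.ofFn a) x) = lam x) →
      Even (Set.ncard {i : Fin m |
        lam (D.word (((List.ofFn a).take i.val).reverse) (a i)) = c (a i) ∨
        lam (D.word (((List.ofFn a).take i.val).reverse) (a i)) = - c (a i)}) := by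
  classical
  intro m a ha hfix
  set l : List X := List.ofFn a with hldef
  have hl : ∀ γ ∈ l, γ ∈ D.base := by
    intro γ h
    obtain ⟨i, rfl⟩ := List.mem_ofFn.mp h
    exact ha i
  have hlamneg : ∀ x : X, lam (-x) = - lam x := fun x => map_neg lam x
  -- every element of W is (as a function) a word in the simple reflections
  have hWword : ∀ g : AddAut X, g ∈ W → ∃ t : List X, (∀ γ ∈ t, γ ∈ D.base) ∧ ⇑g = D.word t := by
    intro g hg
    rw [hW] at hg
    refine Subgroup.closure_induction ?_ ?_ ?_ ?_ hg
    · rintro x ⟨δ, hδ, hx⟩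
      exact ⟨[δ], by simpa using hδ, by rw [hx]; rfl⟩
    · exact ⟨[], by simp, rfl⟩
    · rintro x y _ _ ⟨t1, ht1, hc1⟩ ⟨t2, ht2, hc2⟩
      refine ⟨t2 ++ t1, ?_, ?_⟩
      · intro γ hγ
        rcases List.mem_append.mp hγ with h | h
        · exact ht2 γ h
        · exact ht1 γ h
      · funext x'
        show x (y x') = _
        rw [RRDatum.word_append]
        show _ = D.word t1 (D.word t2 x')
        rw [hc1, hc2]
    · rintro x _ ⟨t, ht, hc⟩
      exact ⟨t.reverse, fun γ hγ => ht γ (List.mem_reverse.mp hγ),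
        D.coe_inv_of_coe_word (fun γ hγ => D.base_sub (ht γ hγ)) hc⟩
  -- the cocycle property at the level of the group
  have hFcomp : ∀ (lam' : X → k), (∀ x, lam' (-x) = - lam' x) →
      ∀ g1 g2 : AddAut X, g1 ∈ W → g2 ∈ W →
      D.Fdeg c lam' ⇑(g1 * g2)
        = D.Fdeg c lam' ⇑g2 + D.Fdeg c (fun x => lam' (g2⁻¹ x)) ⇑g1 := by
    intro lam' hlam' g1 g2 hg1 hg2
    obtain ⟨t1, ht1, hc1⟩ := hWword g1 hg1
    obtain ⟨t2, ht2, hc2⟩ := hWword g2 hg2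
    have hinv : ⇑g2⁻¹ = D.word t2.reverse :=
      D.coe_inv_of_coe_word (fun γ hγ => D.base_sub (ht2 γ hγ)) hc2
    have hcoe : ⇑(g1 * g2) = fun x => D.word t1 (D.word t2 x) := by
      funext x'
      show g1 (g2 x') = _
      rw [hc1, hc2]
    rw [hcoe, hc1, hc2, hinv]
    exact D.Fdeg_comp hcodd lam' hlam' ht2 ht1
  have hFone : ∀ (lam' : X → k), D.Fdeg c lam' ⇑(1 : AddAut X) = 0 := by
    intro lam'
    have : ⇑(1 : AddAut X) = (id : X → X) := rfl
    rw [this, D.Fdeg_id]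
  -- the group element corresponding to our word
  have hg₀ex : ∀ (t : List X), (∀ γ ∈ t, γ ∈ D.base) →
      ∃ g : AddAut X, g ∈ W ∧ ⇑g = D.word t := by
    intro t ht
    induction t with
    | nil => exact ⟨1, one_mem W, rfl⟩
    | cons γ s ihs =>
      obtain ⟨g, hgW, hgcoe⟩ := ihs (fun x hx => ht x (List.mem_cons_of_mem _ hx))
      have hγ : γ ∈ D.base := ht γ (List.mem_cons_self)
      refine ⟨g * D.reflAut (D.base_sub hγ), mul_mem hgW ?_, ?_⟩
      · rw [hW]
        exact Subgroup.subset_closure ⟨γ, hγ, rfl⟩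
      · funext x'
        show g (D.reflAut (D.base_sub hγ) x') = D.word (γ :: s) x'
        rw [RRDatum.word_apply_cons, hgcoe]
        rfl
  obtain ⟨g₀, hg₀W, hg₀⟩ := hg₀ex l hl
  have hg₀fix : ∀ x, lam (g₀ x) = lam x := by
    intro x
    have : g₀ x = D.word l x := congrFun hg₀ x
    rw [this]
    exact hfix x
  -- the parabolicity argument
  obtain ⟨u, huW, hstab⟩ := hpar
  set μ : X → k := fun x => lam (u⁻¹ x) with hμ
  have hμneg : ∀ x, μ (-x) = - μ x := by
    intro x
    show lam (u⁻¹ (-x)) = - lam (u⁻¹ x)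
    rw [map_neg u⁻¹, map_neg]
  set v : AddAut X := u * g₀ * u⁻¹ with hvdef
  have hvW : v ∈ W := mul_mem (mul_mem huW hg₀W) (inv_mem huW)
  have hvfix : ∀ x, μ (v x) = μ x := by
    intro x
    show lam (u⁻¹ (v x)) = lam (u⁻¹ x)
    have h1 : v x = u (g₀ (u⁻¹ x)) := rfl
    have h2 : u⁻¹ (u (g₀ (u⁻¹ x))) = g₀ (u⁻¹ x) := by
      show (u⁻¹ * u) (g₀ (u⁻¹ x)) = _
      rw [inv_mul_cancel]
      rfl
    rw [h1, h2]
    exact hg₀fix (u⁻¹ x)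
  have hvmem : v ∈ W ⊓ addCharStabilizer (lam.comp (AddEquiv.toAddMonoidHom u⁻¹)) := by
    refine Subgroup.mem_inf.mpr ⟨hvW, ?_⟩
    intro x
    exact hvfix x
  rw [hstab] at hvmem
  -- induction over the closure
  have hkey : v ∈ W ∧ (∀ x, μ (v x) = μ x) ∧ D.Fdeg c μ ⇑v = 0 := by
    refine Subgroup.closure_induction ?_ ?_ ?_ ?_ hvmem
    · rintro g ⟨δ, hδ, hgcoe, hgfix⟩
      have hgW : g ∈ W := by
        rw [hW]
        exact Subgroup.subset_closure ⟨δ, hδ, hgcoe⟩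
      have hgfix' : ∀ x, μ (g x) = μ x := by
        intro x
        have : g x = D.refl δ x := congrFun hgcoe x
        rw [hμ]
        simp only
        rw [this]
        exact hgfix x
      refine ⟨hgW, hgfix', ?_⟩
      rw [hgcoe, D.Fdeg_refl hδ, D.ctil_base hcodd hδ]
      -- μ δ = 0
      obtain ⟨ω, _, hω1, _⟩ := hsc δ hδ
      have hrefl : D.refl δ ω = ω - δ := by
        rw [D.refl_apply, hω1, one_smul]
      have hμδ : μ δ = 0 := by
        have h1 := hgfix ω
        rw [hrefl] at h1
        have h2 : u⁻¹ (ω - δ) = u⁻¹ ω - u⁻¹ δ := map_sub u⁻¹ ω δ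
        rw [h2, map_sub] at h1
        exact sub_eq_self.mp h1
      rw [if_neg]
      rintro (h | h)
      · rw [hμδ] at h
        exact hc0 δ hδ h.symm
      · rw [hμδ] at h
        exact hc0 δ hδ (neg_eq_zero.mp h.symm)
    · exact ⟨one_mem W, fun x => rfl, hFone μ⟩
    · rintro g1 g2 _ _ ⟨hW1, hfix1, hF1⟩ ⟨hW2, hfix2, hF2⟩
      refine ⟨mul_mem hW1 hW2, ?_, ?_⟩
      · intro x
        show μ (g1 (g2 x)) = μ x
        rw [hfix1, hfix2]
      · rw [hFcomp μ hμneg g1 g2 hW1 hW2, hF2]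
        have : (fun x => μ (g2⁻¹ x)) = μ := by
          funext x
          have h1 : g2 (g2⁻¹ x) = x := by
            show (g2 * g2⁻¹) x = x
            rw [mul_inv_cancel]
            rfl
          have := hfix2 (g2⁻¹ x)
          rw [h1] at this
          exact this.symm
        rw [this, hF1, zero_add]
    · rintro g _ ⟨hW1, hfix1, hF1⟩
      have hfixinv : ∀ x, μ (g⁻¹ x) = μ x := by
        intro x
        have h1 : g (g⁻¹ x) = x := by
          show (g * g⁻¹) x = x
          rw [mul_inv_cancel]
          rfl
        have := hfix1 (g⁻¹ x)
        rw [h1] at this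
        exact this.symm
      refine ⟨inv_mem hW1, hfixinv, ?_⟩
      have hcomp := hFcomp μ hμneg g g⁻¹ hW1 (inv_mem hW1)
      rw [mul_inv_cancel, hFone μ] at hcomp
      have h2 : (fun x => μ ((g⁻¹)⁻¹ x)) = μ := by
        funext x
        rw [inv_inv]
        exact hfix1 x
      rw [h2, hF1, add_zero] at hcomp
      exact hcomp.symm
  -- transfer back: F lam g₀ = 0
  have hFg₀ : D.Fdeg c (fun x => lam x) ⇑g₀ = 0 := by
    have hstep1 : D.Fdeg c (fun x => lam x) ⇑((u⁻¹ * v) * u)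
        = D.Fdeg c (fun x => lam x) ⇑u + D.Fdeg c μ ⇑(u⁻¹ * v) :=
      hFcomp (fun x => lam x) hlamneg (u⁻¹ * v) u (mul_mem (inv_mem huW) hvW) huW
    have hstep2 : D.Fdeg c μ ⇑(u⁻¹ * v)
        = D.Fdeg c μ ⇑v + D.Fdeg c (fun x => μ (v⁻¹ x)) ⇑u⁻¹ :=
      hFcomp μ hμneg u⁻¹ v (inv_mem huW) hvW
    have hμv : (fun x => μ (v⁻¹ x)) = μ := by
      funext x
      have h1 : v (v⁻¹ x) = x := by
        show (v * v⁻¹) x = x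
        rw [mul_inv_cancel]
        rfl
      have := hkey.2.1 (v⁻¹ x)
      rw [h1] at this
      exact this.symm
    have hstep3 : D.Fdeg c (fun x => lam x) ⇑(u⁻¹ * u)
        = D.Fdeg c (fun x => lam x) ⇑u + D.Fdeg c μ ⇑u⁻¹ :=
      hFcomp (fun x => lam x) hlamneg u⁻¹ u (inv_mem huW) huW
    rw [inv_mul_cancel, hFone] at hstep3
    have hguv : (u⁻¹ * v) * u = g₀ := by
      rw [hvdef]
      group
    rw [hguv] at hstep1
    rw [hstep2, hμv, hkey.2.2, zero_add] at hstep1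
    rw [hstep1]
    exact hstep3.symm
  -- conclude via step1
  have hF0 : D.Fdeg c (fun x => lam x) (D.word l) = 0 := by
    rw [← hg₀]
    exact hFg₀
  have hsum := D.step1 hcodd (fun x => lam x) hlamneg l hl
  rw [hF0] at hsum
  have hlen : l.length = m := by rw [hldef, List.length_ofFn]
  have hset : {i : Fin m |
      lam (D.word ((l.take i.val).reverse) (a i)) = c (a i) ∨
      lam (D.word ((l.take i.val).reverse) (a i)) = - c (a i)}
      = ↑(Finset.univ.filter (fun i : Fin m =>
        lam (D.word ((l.take i.val).reverse) (a i)) = c (a i) ∨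
        lam (D.word ((l.take i.val).reverse) (a i)) = - c (a i))) := by
    ext i
    simp
  rw [hset, Set.ncard_coe_finset]
  have heven : ∀ n : ℕ, ((n : ZMod 2) = 0) → Even n := by
    intro n hn
    rw [even_iff_two_dvd]
    exact (ZMod.natCast_eq_zero_iff n 2).mp hn
  apply heven
  have hcast : ∀ i : Fin m, ((if (lam (D.word ((l.take i.val).reverse) (a i)) = c (a i) ∨
      lam (D.word ((l.take i.val).reverse) (a i)) = - c (a i)) then (1 : ℕ) else 0 : ℕ) : ZMod 2)
      = (if (lam (D.word ((l.take i.val).reverse) (a i)) = c (a i) ∨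
      lam (D.word ((l.take i.val).reverse) (a i)) = - c (a i)) then (1 : ZMod 2) else 0) := by
    intro i
    split_ifs <;> simp
  rw [Finset.card_filter, Nat.cast_sum, Finset.sum_congr rfl (fun i _ => hcast i)]
  have hconv : ∑ i : Fin m, (if (lam (D.word ((l.take i.val).reverse) (a i)) = c (a i) ∨
      lam (D.word ((l.take i.val).reverse) (a i)) = - c (a i)) then (1 : ZMod 2) else 0)
      = ∑ i ∈ Finset.range m, (fun j =>
        if (lam (D.word ((l.take j).reverse) (l.getD j 0)) = c (l.getD j 0)
            ∨ lam (D.word ((l.take j).reverse) (l.getD j 0)) = - c (l.getD j 0))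
        then (1 : ZMod 2) else 0) i := by
    rw [← Fin.sum_univ_eq_sum_range]
    apply Finset.sum_congr rfl
    intro i _
    have hgd : l.getD i.val 0 = a i := by
      rw [List.getD_eq_getElem _ _ (by rw [hlen]; exact i.isLt)]
      simp only [hldef, List.getElem_ofFn, Fin.eta]
    simp only [hgd]
  rw [hconv, ← hlen]
  exact hsum
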